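/- Define Centrist : [0,1]^d → {0,1} by Centrist(x) = 1 iff there exists i with x_i ∈ (1 - 2/d, 1 - 1/d]. The distance of Centrist to the set of monotone Boolean functions, under the uniform measure on [0,1]^d, is at least (1-2/d)^{d-1} (which is Ω(1) for d ≥ 4). -/

import Mathlib

open MeasureTheory

lemma aux_sum {α : Type*} [MeasurableSpace α] (μ : Measure α)
    {ι : Type*} [DecidableEq ι] (s : Finset ι) (E : ι → Set α) (D : Set α)
    (hE : ∀ i ∈ s, MeasurableSet (E i))
    (hd : ∀ i ∈ s, ∀ j ∈ s, i ≠ j → Disjoint (E i) (E j)) :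
    ∑ i ∈ s, μ (D ∩ E i) ≤ μ D := by
  induction s using Finset.induction_on generalizing D with
  | empty => simp
  | @insert a s ha ih =>
    rw [Finset.sum_insert ha]
    have key := measure_inter_add_diff (μ := μ) D (hE a (Finset.mem_insert_self a s))
    have h2 : ∑ i ∈ s, μ (D ∩ E i) ≤ μ (D \ E a) := by
      calc ∑ i ∈ s, μ (D ∩ E i) ≤ ∑ i ∈ s, μ ((D \ E a) ∩ E i) := by
            refine Finset.sum_le_sum fun i hi => measure_mono fun x hx => ?_
            exact ⟨⟨hx.1, fun hxa => (hd a (Finset.mem_insert_self a s) i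
              (Finset.mem_insert_of_mem hi) (fun h => ha (h ▸ hi)) |>.le_bot ⟨hxa, hx.2⟩)⟩, hx.2⟩
        _ ≤ μ (D \ E a) := ih _ (fun i hi => hE i (Finset.mem_insert_of_mem hi))
            (fun i hi j hj hij => hd i (Finset.mem_insert_of_mem hi) j (Finset.mem_insert_of_mem hj) hij)
    calc μ (D ∩ E a) + ∑ i ∈ s, μ (D ∩ E i) ≤ μ (D ∩ E a) + μ (D \ E a) := by gcongr
      _ = μ D := key

/-- The distance of the `Centrist` function to monotonicity, under the uniform
measure on `[0,1]^d`, is at least `(1-2/d)^(d-1)`: every function `g` that is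
monotone on the unit cube disagrees with `Centrist` on a set of measure at least
`(1-2/d)^(d-1)`. -/

theorem stmt_11 (d : ℕ) (hd : 4 ≤ d) (g : (Fin d → ℝ) → Bool)
    (hg : ∀ x y : Fin d → ℝ, x ∈ Set.Icc (0 : Fin d → ℝ) 1 →
      y ∈ Set.Icc (0 : Fin d → ℝ) 1 → x ≤ y → g x = true → g y = true) :
    ENNReal.ofReal ((1 - 2/(d:ℝ))^(d-1)) ≤
      volume {x : Fin d → ℝ | x ∈ Set.Icc (0 : Fin d → ℝ) 1 ∧
        ¬ ((∃ i, 1 - 2/(d:ℝ) < x i ∧ x i ≤ 1 - 1/(d:ℝ)) ↔ g x = true)} := by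
  classical
  have hd0 : (0:ℝ) < d := by
    have : (0:ℕ) < d := by omega
    exact_mod_cast this
  obtain ⟨a, b, c, ha_eq, hb_eq, ha0, hc0, hab, hb1, hdc⟩ :
      ∃ a b c : ℝ, a = 1 - 2/(d:ℝ) ∧ b = 1 - 1/(d:ℝ) ∧ 0 ≤ a ∧ 0 < c ∧
        a + c = b ∧ b + c = 1 ∧ (d:ℝ) * c = 1 := by
    refine ⟨1 - 2/(d:ℝ), 1 - 1/(d:ℝ), 1/(d:ℝ), rfl, rfl, ?_, by positivity, ?_, ?_, ?_⟩
    · have : 2/(d:ℝ) ≤ 2/4 := by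
        apply div_le_div_of_nonneg_left (by norm_num) (by norm_num)
        exact_mod_cast hd
      linarith
    · field_simp; ring
    · field_simp; ring
    · field_simp
  rw [← ha_eq, ← hb_eq]
  have haltb : a < b := by linarith
  have hble : b ≤ 1 := by linarith
  set D : Set (Fin d → ℝ) := {x : Fin d → ℝ | x ∈ Set.Icc (0 : Fin d → ℝ) 1 ∧
        ¬ ((∃ i, a < x i ∧ x i ≤ b) ↔ g x = true)} with hD_def
  set S : Fin d → Set (Fin d → ℝ) :=
    fun i => Set.pi Set.univ (fun j => if j = i then Set.Ioc a b else Set.Icc 0 a) with hS_def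
  set T : Fin d → Set (Fin d → ℝ) :=
    fun i => Set.pi Set.univ (fun j => if j = i then Set.Ioc b 1 else Set.Icc 0 a) with hT_def
  set v : Fin d → (Fin d → ℝ) := fun i j => if j = i then c else 0 with hv_def
  -- membership characterizations
  have hSmem : ∀ i x, x ∈ S i ↔ ((a < x i ∧ x i ≤ b) ∧ ∀ j, j ≠ i → 0 ≤ x j ∧ x j ≤ a) := by
    intro i x
    simp only [hS_def, Set.mem_pi, Set.mem_univ, forall_true_left]
    constructor
    · intro h
      refine ⟨?_, fun j hj => ?_⟩
      · have := h i; rw [if_pos rfl] at this; exact this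
      · have := h j; rw [if_neg hj] at this; exact this
    · intro ⟨h1, h2⟩ j
      by_cases hj : j = i
      · subst hj; rw [if_pos rfl]; exact h1
      · rw [if_neg hj]; exact h2 j hj
  have hTmem : ∀ i x, x ∈ T i ↔ ((b < x i ∧ x i ≤ 1) ∧ ∀ j, j ≠ i → 0 ≤ x j ∧ x j ≤ a) := by
    intro i x
    simp only [hT_def, Set.mem_pi, Set.mem_univ, forall_true_left]
    constructor
    · intro h
      refine ⟨?_, fun j hj => ?_⟩
      · have := h i; rw [if_pos rfl] at this; exact this
      · have := h j; rw [if_neg hj] at this; exact this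
    · intro ⟨h1, h2⟩ j
      by_cases hj : j = i
      · subst hj; rw [if_pos rfl]; exact h1
      · rw [if_neg hj]; exact h2 j hj
  have hxv : ∀ i (x : Fin d → ℝ) j, (x + v i) j = x j + if j = i then c else 0 :=
    fun i x j => rfl
  -- x + v i moves S i to T i
  have hadd : ∀ i x, (x + v i) ∈ T i ↔ x ∈ S i := by
    intro i x
    rw [hSmem, hTmem]
    constructor
    · rintro ⟨⟨h1, h2⟩, h3⟩
      rw [hxv i x i, if_pos rfl] at h1 h2
      refine ⟨⟨by linarith, by linarith⟩, fun j hj => ?_⟩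
      have := h3 j hj; rw [hxv i x j, if_neg hj, add_zero] at this; exact this
    · rintro ⟨⟨h1, h2⟩, h3⟩
      refine ⟨⟨?_, ?_⟩, fun j hj => ?_⟩
      · rw [hxv i x i, if_pos rfl]; linarith
      · rw [hxv i x i, if_pos rfl]; linarith
      · rw [hxv i x j, if_neg hj, add_zero]; exact h3 j hj
  -- key pointwise step
  have hstep : ∀ i, S i ⊆ (D ∩ S i) ∪ ((fun x => x + v i) ⁻¹' (D ∩ T i)) := by
    intro i x hx
    obtain ⟨⟨hx1, hx2⟩, hx3⟩ := (hSmem i x).mp hx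
    have hcube : x ∈ Set.Icc (0 : Fin d → ℝ) 1 := by
      constructor <;> intro j <;> by_cases hj : j = i
      · subst hj; show (0:ℝ) ≤ x j; linarith
      · show (0:ℝ) ≤ x j; exact (hx3 j hj).1
      · subst hj; show x j ≤ (1:ℝ); linarith
      · show x j ≤ (1:ℝ); linarith [(hx3 j hj).2]
    have hxex : ∃ k, a < x k ∧ x k ≤ b := ⟨i, hx1, hx2⟩
    by_cases hgx : g x = true
    · right
      have hcube' : (x + v i) ∈ Set.Icc (0 : Fin d → ℝ) 1 := by
        constructor <;> intro j <;> rw [hxv i x j] <;> by_cases hj : j = i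
        · subst hj; rw [if_pos rfl]; show (0:ℝ) ≤ x j + c; linarith
        · rw [if_neg hj, add_zero]; exact (hx3 j hj).1
        · subst hj; rw [if_pos rfl]; show x j + c ≤ (1:ℝ); linarith
        · rw [if_neg hj, add_zero]; show x j ≤ (1:ℝ); linarith [(hx3 j hj).2]
      have hle : x ≤ x + v i := by
        intro j; rw [hxv i x j]; by_cases hj : j = i
        · rw [if_pos hj]; linarith
        · rw [if_neg hj, add_zero]
      have hg' : g (x + v i) = true := hg x (x + v i) hcube hcube' hle hgx
      have hnoex : ¬ ∃ k, a < (x + v i) k ∧ (x + v i) k ≤ b := by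
        rintro ⟨k, hk1, hk2⟩
        rw [hxv i x k] at hk1 hk2
        by_cases hk : k = i
        · rw [if_pos hk] at hk2; subst hk; linarith
        · rw [if_neg hk, add_zero] at hk1; linarith [(hx3 k hk).2]
      refine ⟨⟨hcube', fun h => hnoex (h.mpr hg')⟩, (hadd i x).mpr hx⟩
    · left
      exact ⟨⟨hcube, fun h => hgx (h.mp hxex)⟩, hx⟩
  -- measurability
  have hSm : ∀ i, MeasurableSet (S i) := by
    intro i
    apply MeasurableSet.univ_pi
    intro j
    by_cases hj : j = i
    · rw [if_pos hj]; exact measurableSet_Ioc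
    · rw [if_neg hj]; exact measurableSet_Icc
  have hTm : ∀ i, MeasurableSet (T i) := by
    intro i
    apply MeasurableSet.univ_pi
    intro j
    by_cases hj : j = i
    · rw [if_pos hj]; exact measurableSet_Ioc
    · rw [if_neg hj]; exact measurableSet_Icc
  -- disjointness of the family (Sum.elim S T)
  have hST : ∀ i j (x : Fin d → ℝ), x ∈ S i → x ∈ T j → False := by
    intro i j x hxS hxT
    obtain ⟨⟨h1, h2⟩, h3⟩ := (hSmem i x).mp hxS
    obtain ⟨⟨h4, h5⟩, h6⟩ := (hTmem j x).mp hxT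
    by_cases hij : i = j
    · subst hij; linarith
    · have := (h3 j (Ne.symm hij)).2; linarith
  have hSS : ∀ i j (x : Fin d → ℝ), i ≠ j → x ∈ S i → x ∈ S j → False := by
    intro i j x hij hxS hxS'
    obtain ⟨⟨h1, _⟩, _⟩ := (hSmem i x).mp hxS
    obtain ⟨_, h3⟩ := (hSmem j x).mp hxS'
    have := (h3 i (fun h => hij h)).2
    linarith
  have hTT : ∀ i j (x : Fin d → ℝ), i ≠ j → x ∈ T i → x ∈ T j → False := by
    intro i j x hij hxT hxT'
    obtain ⟨⟨h1, _⟩, _⟩ := (hTmem i x).mp hxT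
    obtain ⟨_, h3⟩ := (hTmem j x).mp hxT'
    have := (h3 i (fun h => hij h)).2
    linarith
  have hdisj : ∀ p q : Fin d ⊕ Fin d, p ≠ q →
      Disjoint (Sum.elim S T p) (Sum.elim S T q) := by
    rintro (i | i) (j | j) hpq <;>
      refine Set.disjoint_left.mpr fun x hx hx' => ?_
    · exact hSS i j x (fun h => hpq (by rw [h])) hx hx'
    · exact hST i j x hx hx'
    · exact hST j i x hx' hx
    · exact hTT i j x (fun h => hpq (by rw [h])) hx hx'
  -- measure of S i ≤ measure of D∩S i + D∩T i
  have hkey : ∀ i, volume (S i) ≤ volume (D ∩ S i) + volume (D ∩ T i) := by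
    intro i
    calc volume (S i) ≤ volume ((D ∩ S i) ∪ ((fun x => x + v i) ⁻¹' (D ∩ T i))) :=
          measure_mono (hstep i)
      _ ≤ volume (D ∩ S i) + volume ((fun x => x + v i) ⁻¹' (D ∩ T i)) := measure_union_le _ _
      _ = volume (D ∩ S i) + volume (D ∩ T i) := by
          rw [measure_preimage_add_right volume (v i) (D ∩ T i)]
  -- volume of S i
  have hvol : ∀ i, volume (S i) = ENNReal.ofReal c * ENNReal.ofReal a ^ (d - 1) := by
    intro i
    rw [hS_def, volume_pi_pi]
    have heach : ∀ j : Fin d, volume (if j = i then Set.Ioc a b else Set.Icc 0 a)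
        = if j = i then ENNReal.ofReal c else ENNReal.ofReal a := by
      intro j
      by_cases hj : j = i
      · rw [if_pos hj, if_pos hj, Real.volume_Ioc, show b - a = c by linarith]
      · rw [if_neg hj, if_neg hj, Real.volume_Icc, sub_zero]
    rw [Finset.prod_congr rfl (fun j _ => heach j)]
    rw [← Finset.mul_prod_erase Finset.univ _ (Finset.mem_univ i), if_pos rfl]
    rw [Finset.prod_congr rfl (fun j hj => if_neg (Finset.ne_of_mem_erase hj)),
      Finset.prod_const, Finset.card_erase_of_mem (Finset.mem_univ i),
      Finset.card_univ, Fintype.card_fin]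
  -- put it together
  have hsum : ∑ p : Fin d ⊕ Fin d, volume (D ∩ Sum.elim S T p) ≤ volume D := by
    apply aux_sum volume Finset.univ (Sum.elim S T) D
    · rintro (i | i) _
      · exact hSm i
      · exact hTm i
    · intro p _ q _ hpq; exact hdisj p q hpq
  have hsum2 : ∑ i : Fin d, volume (S i) ≤ volume D := by
    refine le_trans ?_ hsum
    rw [Fintype.sum_sum_type]
    calc ∑ i : Fin d, volume (S i)
        ≤ ∑ i : Fin d, (volume (D ∩ S i) + volume (D ∩ T i)) :=
          Finset.sum_le_sum fun i _ => hkey i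
      _ = ∑ i : Fin d, volume (D ∩ Sum.elim S T (Sum.inl i))
          + ∑ i : Fin d, volume (D ∩ Sum.elim S T (Sum.inr i)) := by
          rw [← Finset.sum_add_distrib]; rfl
  refine le_trans ?_ hsum2
  rw [Finset.sum_congr rfl (fun i _ => hvol i), Finset.sum_const, Finset.card_univ,
    Fintype.card_fin]
  rw [nsmul_eq_mul, ← mul_assoc]
  have h1 : (d : ENNReal) * ENNReal.ofReal c = 1 := by
    rw [← ENNReal.ofReal_natCast d, ← ENNReal.ofReal_mul (by positivity), hdc,
      ENNReal.ofReal_one]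
  rw [h1, one_mul, ← ENNReal.ofReal_pow ha0]
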